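/- Let E be a real Hilbert space, L a closed linear subspace of E, and C a nonempty closed convex cone in E with L ⊆ C. For θ ∈ E define Δ(θ) = ‖θ − P_L(θ)‖² − ‖θ − P_C(θ)‖². Then Δ(θ) > 0 if and only if θ ∉ (C ∩ L⊥)°, where (C ∩ L⊥)° = {u ∈ E : ⟨u, v⟩ ≤ 0 for all v ∈ C ∩ L⊥} is the polar cone of C ∩ L⊥. (This characterizes the set on which the distance test for Type A problems is consistent.) -/

import Mathlib

open RealInnerProductSpace

lemma min_norm_eq_iInf {E : Type*} [NormedAddCommGroup E] [InnerProductSpace ℝ E]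
    {K : Set E} {x p : E} (hp : p ∈ K) (h : ∀ y ∈ K, ‖x - p‖ ≤ ‖x - y‖) :
    ‖x - p‖ = ⨅ w : K, ‖x - w‖ := by
  haveI : Nonempty K := ⟨⟨p, hp⟩⟩
  refine le_antisymm (le_ciInf fun w => h w w.2) ?_
  have hb : BddBelow (Set.range fun w : K => ‖x - w‖) :=
    ⟨0, by rintro a ⟨w, rfl⟩; exact norm_nonneg _⟩
  exact ciInf_le hb ⟨p, hp⟩

/-- Let E be a real Hilbert space, L a closed linear subspace, C a nonempty
closed convex cone with L ⊆ C. For θ ∈ E define Δ(θ) = ‖θ − P_L(θ)‖² − ‖θ − P_C(θ)‖².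
Then Δ(θ) > 0 if and only if θ ∉ (C ∩ L⊥)°, where (C ∩ L⊥)° is the polar cone
{u : ⟨u, v⟩ ≤ 0 for all v ∈ C ∩ L⊥}. -/
theorem stmt3 {E : Type*} [NormedAddCommGroup E] [InnerProductSpace ℝ E] [CompleteSpace E]
    (L : Submodule ℝ E) (hLclosed : IsClosed (L : Set E))
    (C : Set E) (hCne : C.Nonempty) (hCclosed : IsClosed C) (hCconv : Convex ℝ C)
    (hCcone : ∀ c ∈ C, ∀ r : ℝ, 0 ≤ r → r • c ∈ C)
    (hLC : (L : Set E) ⊆ C)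
    (PL PC : E → E)
    (hPL : ∀ x : E, PL x ∈ L ∧ ∀ y ∈ (L : Set E), ‖x - PL x‖ ≤ ‖x - y‖)
    (hPC : ∀ x : E, PC x ∈ C ∧ ∀ y ∈ C, ‖x - PC x‖ ≤ ‖x - y‖) :
    ∀ θ : E, (0 < ‖θ - PL θ‖ ^ 2 - ‖θ - PC θ‖ ^ 2 ↔
      θ ∉ {u : E | ∀ v ∈ C ∩ (Lᗮ : Set E), (inner ℝ u v : ℝ) ≤ 0}) := by
  -- residual of PL is orthogonal to L
  have hres : ∀ x : E, ∀ w ∈ L, ⟪x - PL x, w⟫ = 0 := fun x =>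
    (Submodule.norm_eq_iInf_iff_real_inner_eq_zero L (hPL x).1).1
      (min_norm_eq_iInf (hPL x).1 (hPL x).2)
  -- C contains 0 and is closed under addition
  have h0C : (0 : E) ∈ C := by
    obtain ⟨c, hc⟩ := hCne
    simpa using hCcone c hc 0 le_rfl
  have hadd : ∀ a ∈ C, ∀ b ∈ C, a + b ∈ C := by
    intro a ha b hb
    have h1 : (1/2 : ℝ) • a + (1/2 : ℝ) • b ∈ C :=
      hCconv ha hb (by norm_num) (by norm_num) (by norm_num)
    have h2 := hCcone _ h1 2 (by norm_num)
    simpa [smul_add, smul_smul] using h2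
  intro θ
  obtain ⟨hpLmem, hpLmin⟩ := hPL θ
  obtain ⟨hpCmem, hpCmin⟩ := hPC θ
  set pL := PL θ with hpLdef
  set pC := PC θ with hpCdef
  -- variational characterization of pC
  have hCvar : ∀ c ∈ C, ⟪θ - pC, c - pC⟫ ≤ 0 :=
    (norm_eq_iInf_iff_real_inner_le_zero hCconv hpCmem).1
      (min_norm_eq_iInf hpCmem hpCmin)
  have hpCself : ⟪θ - pC, pC⟫ = 0 := by
    have h1 := hCvar ((2 : ℝ) • pC) (hCcone pC hpCmem 2 (by norm_num))
    have h2 := hCvar 0 h0C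
    have e1 : (2 : ℝ) • pC - pC = pC := by
      rw [two_smul]; abel
    rw [e1] at h1
    rw [zero_sub, inner_neg_right] at h2
    linarith
  have hCineq : ∀ c ∈ C, ⟪θ - pC, c⟫ ≤ 0 := by
    intro c hc
    have := hCvar c hc
    rw [inner_sub_right] at this
    linarith [hpCself]
  have hpLC : pL ∈ C := hLC hpLmem
  have hpLzero : ⟪θ - pC, pL⟫ = 0 := by
    have h1 := hCineq pL hpLC
    have h2 := hCineq (-pL) (hLC (L.neg_mem hpLmem))
    rw [inner_neg_right] at h2
    linarith
  -- Pythagoras-type identity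
  have key : ‖θ - pL‖ ^ 2 = ‖θ - pC‖ ^ 2 + ‖pC - pL‖ ^ 2 := by
    have hdecomp : θ - pL = (θ - pC) + (pC - pL) := by abel
    have hinner : ⟪θ - pC, pC - pL⟫ = 0 := by
      rw [inner_sub_right, hpCself, hpLzero]; ring
    rw [hdecomp, norm_add_sq_real, hinner]; ring
  -- polar membership implies pC = pL
  have hpolar_imp : (∀ v ∈ C ∩ (Lᗮ : Set E), ⟪θ, v⟫ ≤ 0) → pC = pL := by
    intro hpol
    have hvar : ⟪θ - pL, pC - pL⟫ ≤ 0 := by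
      set l := PL pC with hl
      set m := pC - l with hm
      have hlL : l ∈ L := (hPL pC).1
      have hmLperp : m ∈ Lᗮ := by
        intro w hw
        have := hres pC w hw
        rw [real_inner_comm] at this
        exact this
      have hmC : m ∈ C := by
        have : m = pC + (-l) := by rw [hm]; abel
        rw [this]
        exact hadd pC hpCmem (-l) (hLC (L.neg_mem hlL))
      have hθm : ⟪θ, m⟫ ≤ 0 := hpol m ⟨hmC, hmLperp⟩
      have hpLm : ⟪pL, m⟫ = 0 := by
        have := hmLperp pL hpLmem
        exact this
      have hdec : pC - pL = (l - pL) + m := by rw [hm]; abel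
      rw [hdec, inner_add_right]
      have h1 : ⟪θ - pL, l - pL⟫ = 0 := by
        have a : ⟪θ - pL, l⟫ = 0 := hres θ l hlL
        have b : ⟪θ - pL, pL⟫ = 0 := hres θ pL hpLmem
        rw [inner_sub_right, a, b]; ring
      have h2 : ⟪θ - pL, m⟫ ≤ 0 := by
        rw [inner_sub_left]
        linarith [hθm, hpLm]
      linarith
    -- expand ‖θ - pC‖² in terms of pL
    have hexp : ‖θ - pC‖ ^ 2 = ‖θ - pL‖ ^ 2 - 2 * ⟪θ - pL, pC - pL⟫ + ‖pC - pL‖ ^ 2 := by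
      have hdecomp : θ - pC = (θ - pL) - (pC - pL) := by abel
      rw [hdecomp, norm_sub_sq_real]
    have hnz : ‖pC - pL‖ ^ 2 = 0 := by nlinarith [key, hexp, hvar, sq_nonneg ‖pC - pL‖]
    have : pC - pL = 0 := by
      rwa [pow_eq_zero_iff (by norm_num : 2 ≠ 0), norm_eq_zero] at hnz
    exact sub_eq_zero.mp this
  -- pC = pL implies polar membership
  have himp_polar : pC = pL → (∀ v ∈ C ∩ (Lᗮ : Set E), ⟪θ, v⟫ ≤ 0) := by
    intro heq v hv
    obtain ⟨hvC, hvL⟩ := hv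
    have h1 : ⟪θ - pC, v⟫ ≤ 0 := hCineq v hvC
    have h2 : ⟪pC, v⟫ = 0 := by
      rw [heq]
      exact hvL pL hpLmem
    rw [inner_sub_left] at h1
    linarith
  constructor
  · intro hpos hpol
    have heq : pC = pL := hpolar_imp hpol
    rw [heq] at hpos
    simp at hpos
  · intro hnot
    rcases lt_or_ge 0 (‖θ - pL‖ ^ 2 - ‖θ - pC‖ ^ 2) with h | h
    · exact h
    · exfalso
      have hzero : ‖pC - pL‖ ^ 2 = 0 := by nlinarith [key, sq_nonneg ‖pC - pL‖]
      have heq : pC = pL := by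
        have : pC - pL = 0 := by
          rwa [pow_eq_zero_iff (by norm_num : 2 ≠ 0), norm_eq_zero] at hzero
        exact sub_eq_zero.mp this
      exact hnot (himp_polar heq)
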